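/- Suppose S, S₋₁, D are independent nonnegative random variables with S and S₋₁ identically distributed, f : ℝ → ℝ is nonnegative, non-increasing, and differentiable with |f'| non-increasing on [0,∞). If E[D + S + 1] · sqrt(E[(f'(S))²]) / E[f(S + S₋₁)] ≤ (1 - P(S₋₁ - D > 0)) / sqrt(P(S₋₁ - D > 0)), and Δ² P(S₋₁ - D > Δ) is non-increasing for Δ > 1, then for every Δ ≥ 0 the numerator of the derivative of G(Δ) = E[f(S + max(S₋₁ - Δ - D, 0))] / (Δ + E[D] + E[max(S₋₁ - Δ - D, 0)]) is nonpositive, hence G attains its maximum at Δ = 0. -/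

import Mathlib

open MeasureTheory ProbabilityTheory Set

set_option maxHeartbeats 1000000

/-- Theorem 1: Under the stated sufficient condition, the reward
`G(Δ) = E[f(S + max (S₋₁ - Δ - D) 0)] / (Δ + E[D] + E[max (S₋₁ - Δ - D) 0])`
attains its maximum at `Δ = 0`. -/
theorem stmt4 {Ω : Type*} [MeasurableSpace Ω] (μ : Measure Ω) [IsProbabilityMeasure μ]
    (S S₁ D : Ω → ℝ) (f f' : ℝ → ℝ)
    (hSm : Measurable S) (hS1m : Measurable S₁) (hDm : Measurable D)
    (hS0 : ∀ ω, 0 ≤ S ω) (hS10 : ∀ ω, 0 ≤ S₁ ω) (hD0 : ∀ ω, 0 ≤ D ω)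
    (hIndSS : IndepFun S S₁ μ) (hIndSD : IndepFun S D μ) (hIndS1D : IndepFun S₁ D μ)
    (hId : IdentDistrib S S₁ μ μ)
    (hf0 : ∀ x, 0 ≤ f x) (hfanti : Antitone f)
    (hderiv : ∀ x, HasDerivAt f (f' x) x)
    (habs : AntitoneOn (fun x => |f' x|) (Ici (0:ℝ)))
    (hp : 0 < (μ {ω | S₁ ω - D ω > 0}).toReal)
    (hp1 : (μ {ω | S₁ ω - D ω > 0}).toReal < 1)
    (hfpos : 0 < ∫ ω, f (S ω + S₁ ω) ∂μ)
    (hSint : Integrable S μ) (hDint : Integrable D μ)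
    (hf'int : Integrable (fun ω => (f' (S ω)) ^ 2) μ)
    (hfint : ∀ Δ : ℝ, 0 ≤ Δ →
      Integrable (fun ω => f (S ω + max (S₁ ω - Δ - D ω) 0)) μ)
    (htail : ∀ Δ₁ Δ₂ : ℝ, 1 < Δ₁ → Δ₁ ≤ Δ₂ →
      Δ₂ ^ 2 * (μ {ω | S₁ ω - D ω > Δ₂}).toReal
        ≤ Δ₁ ^ 2 * (μ {ω | S₁ ω - D ω > Δ₁}).toReal)
    (hcond : (∫ ω, (D ω + S ω + 1) ∂μ) *
        Real.sqrt (∫ ω, (f' (S ω)) ^ 2 ∂μ) / (∫ ω, f (S ω + S₁ ω) ∂μ)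
      ≤ 1 / Real.sqrt ((μ {ω | S₁ ω - D ω > 0}).toReal)
          - Real.sqrt ((μ {ω | S₁ ω - D ω > 0}).toReal)) :
    ∀ Δ : ℝ, 0 ≤ Δ →
      (∫ ω, f (S ω + max (S₁ ω - Δ - D ω) 0) ∂μ) /
          (Δ + (∫ ω, D ω ∂μ) + ∫ ω, max (S₁ ω - Δ - D ω) 0 ∂μ)
        ≤ (∫ ω, f (S ω + max (S₁ ω - D ω) 0) ∂μ) /
          ((∫ ω, D ω ∂μ) + ∫ ω, max (S₁ ω - D ω) 0 ∂μ) := by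
  intro Δ hΔ
  -- Notation
  set A : Set Ω := {ω | S₁ ω - D ω > 0} with hAdef
  have hA : MeasurableSet A := measurableSet_lt measurable_const (hS1m.sub hDm)
  set p : ℝ := (μ A).toReal with hpdef
  have hp0 : (0:ℝ) ≤ p := ENNReal.toReal_nonneg
  have hf'eq : f' = deriv f := funext fun x => ((hderiv x).deriv).symm
  have hfcont : Continuous f :=
    Differentiable.continuous (fun x => (hderiv x).differentiableAt)
  -- Basic integrability
  have hS1int : Integrable S₁ μ := hId.integrable_iff.mp hSint
  have hES : ∫ ω, S ω ∂μ = ∫ ω, S₁ ω ∂μ := hId.integral_eq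
  -- The waiting times
  set W : Ω → ℝ := fun ω => max (S₁ ω - Δ - D ω) 0 with hWdef
  set W0 : Ω → ℝ := fun ω => max (S₁ ω - D ω) 0 with hW0def
  have hWm : Measurable W := ((hS1m.sub measurable_const).sub hDm).max measurable_const
  have hW0m : Measurable W0 := (hS1m.sub hDm).max measurable_const
  have hWnn : ∀ ω, 0 ≤ W ω := fun ω => le_max_right _ _
  have hW0nn : ∀ ω, 0 ≤ W0 ω := fun ω => le_max_right _ _
  have hWleW0 : ∀ ω, W ω ≤ W0 ω := fun ω =>
    max_le_max (by linarith [hD0 ω]) le_rfl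
  have hW0leS1 : ∀ ω, W0 ω ≤ S₁ ω := fun ω =>
    max_le (by linarith [hD0 ω]) (hS10 ω)
  have hWint : Integrable W μ := by
    refine hS1int.mono' hWm.aestronglyMeasurable (ae_of_all _ fun ω => ?_)
    rw [Real.norm_eq_abs, abs_of_nonneg (hWnn ω)]
    exact le_trans (hWleW0 ω) (hW0leS1 ω)
  have hW0int : Integrable W0 μ := by
    refine hS1int.mono' hW0m.aestronglyMeasurable (ae_of_all _ fun ω => ?_)
    rw [Real.norm_eq_abs, abs_of_nonneg (hW0nn ω)]
    exact hW0leS1 ω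
  have hintfΔ : Integrable (fun ω => f (S ω + W ω)) μ := hfint Δ hΔ
  have hintf0 : Integrable (fun ω => f (S ω + W0 ω)) μ := by
    have := hfint 0 le_rfl
    simpa [hW0def] using this
  -- names for the main quantities
  set NΔ : ℝ := ∫ ω, f (S ω + W ω) ∂μ with hNΔdef
  set N0 : ℝ := ∫ ω, f (S ω + W0 ω) ∂μ with hN0def
  set d : ℝ := ∫ ω, D ω ∂μ with hddef
  set wΔ : ℝ := ∫ ω, W ω ∂μ with hwΔdef
  set w0 : ℝ := ∫ ω, W0 ω ∂μ with hw0def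
  set F : ℝ := ∫ ω, f (S ω + S₁ ω) ∂μ with hFdef
  set I : ℝ := ∫ ω, (f' (S ω)) ^ 2 ∂μ with hIdef
  have hI0 : (0:ℝ) ≤ I := integral_nonneg fun ω => sq_nonneg _
  have hd0 : (0:ℝ) ≤ d := integral_nonneg fun ω => hD0 ω
  have hN00 : (0:ℝ) ≤ N0 := integral_nonneg fun ω => hf0 _
  have hNΔ0 : (0:ℝ) ≤ NΔ := integral_nonneg fun ω => hf0 _
  -- indicator of A
  set ind : Ω → ℝ := A.indicator (fun _ => (1:ℝ)) with hinddef
  have hindint : Integrable ind μ := (integrable_const (1:ℝ)).indicator hA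
  have hindeq : ∫ ω, ind ω ∂μ = p := integral_indicator_one hA
  -- |f'| composed with S
  set g : Ω → ℝ := fun ω => |f' (S ω)| with hgdef
  have hgm : Measurable g := by
    rw [hgdef, hf'eq]; exact ((measurable_deriv f).comp hSm).abs
  have hgnn : ∀ ω, 0 ≤ g ω := fun ω => abs_nonneg _
  have hgsq : ∀ ω, g ω ^ 2 = (f' (S ω))^2 := fun ω => sq_abs _
  have hgint : Integrable g μ := by
    refine ((hf'int.add (integrable_const 1)).div_const 2).mono'
      hgm.aestronglyMeasurable (ae_of_all _ fun ω => ?_)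
    rw [Real.norm_eq_abs, abs_of_nonneg (hgnn ω)]
    have h1 : g ω ^ 2 = (f' (S ω))^2 := hgsq ω
    simp only [Pi.add_apply]
    nlinarith [sq_nonneg (g ω - 1), hgnn ω]
  -- the key pointwise bound via MVT
  have hpt : ∀ ω, f (S ω + W ω) - f (S ω + W0 ω) ≤ Δ * (g ω * ind ω) := by
    intro ω
    by_cases hωA : ω ∈ A
    · have hind1 : ind ω = 1 := by simp [hinddef, hωA]
      rw [hind1, mul_one]
      set a : ℝ := S ω + W ω with ha
      set b : ℝ := S ω + W0 ω with hb
      have hab : a ≤ b := by have := hWleW0 ω; simp only [ha, hb]; linarith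
      have hba : b - a ≤ Δ := by
        have : W0 ω - W ω ≤ Δ := by
          simp only [hWdef, hW0def]
          rcases le_or_gt (S₁ ω - Δ - D ω) 0 with h | h
          · rw [max_eq_right h, sub_zero]
            exact max_le (by linarith) hΔ
          · rw [max_eq_left h.le, max_eq_left (by linarith)]
            linarith
        simp only [ha, hb]; linarith
      rcases eq_or_lt_of_le hab with heq | hlt
      · rw [heq]
        have : (0:ℝ) ≤ Δ * g ω := mul_nonneg hΔ (hgnn ω)
        linarith
      · -- mean value theorem
        obtain ⟨c, hc, hceq⟩ := exists_hasDerivAt_eq_slope f f' hlt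
          (hfcont.continuousOn) (fun x _ => hderiv x)
        have hfc : f b - f a = f' c * (b - a) := by
          rw [hceq, div_mul_cancel₀ _ (ne_of_gt (sub_pos.mpr hlt))]
        have hSa : S ω ≤ a := by simp only [ha]; linarith [hWnn ω]
        have hcge : S ω ≤ c := le_trans hSa hc.1.le
        have habs_le : |f' c| ≤ g ω := by
          simpa [hgdef] using habs (mem_Ici.mpr (hS0 ω))
            (mem_Ici.mpr (le_trans (hS0 ω) hcge)) hcge
        have h1 : f a - f b = -(f' c) * (b - a) := by linarith [hfc]
        have h2 : -(f' c) ≤ |f' c| := neg_le_abs _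
        have hba0 : 0 ≤ b - a := by linarith
        calc f a - f b = -(f' c) * (b - a) := h1
          _ ≤ |f' c| * (b - a) := mul_le_mul_of_nonneg_right h2 hba0
          _ ≤ g ω * (b - a) := mul_le_mul_of_nonneg_right habs_le hba0
          _ ≤ g ω * Δ := mul_le_mul_of_nonneg_left hba (hgnn ω)
          _ = Δ * g ω := mul_comm _ _
    · have hind0 : ind ω = 0 := by simp [hinddef, hωA]
      have hx : S₁ ω - D ω ≤ 0 := by
        simp only [hAdef, mem_setOf_eq, not_lt] at hωA
        exact hωA
      have hW0z : W0 ω = 0 := max_eq_right hx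
      have hWz : W ω = 0 := max_eq_right (by linarith)
      rw [hind0, hW0z, hWz, mul_zero, mul_zero, sub_self]
  -- integrability of g * ind
  have hgind_int : Integrable (fun ω => g ω * ind ω) μ := by
    refine hgint.mono' (hgm.mul (((measurable_const).indicator hA))).aestronglyMeasurable
      (ae_of_all _ fun ω => ?_)
    rw [Real.norm_eq_abs]
    have : ind ω = 0 ∨ ind ω = 1 := by
      by_cases h : ω ∈ A <;> simp [hinddef, h]
    rcases this with h | h <;> rw [h] <;>
      simp [abs_of_nonneg (hgnn ω), hgnn ω]
  -- Cauchy–Schwarz (via AM-GM): ∫ g·1_A ≤ √I √p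
  have hCS : ∫ ω, g ω * ind ω ∂μ ≤ Real.sqrt I * Real.sqrt p := by
    rcases eq_or_lt_of_le hI0 with hIz | hIpos
    · -- I = 0 means g = 0 a.e.
      have hz : (fun ω => (f' (S ω))^2) =ᵐ[μ] 0 := by
        rw [← integral_eq_zero_iff_of_nonneg (fun ω => sq_nonneg _) hf'int]
        exact hIz.symm
      have hz' : (fun ω => g ω * ind ω) =ᵐ[μ] 0 := by
        filter_upwards [hz] with ω hω
        have h2 : (f' (S ω))^2 = 0 := hω
        have : f' (S ω) = 0 := by
          exact pow_eq_zero_iff (two_ne_zero) |>.mp h2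
        simp [hgdef, this]
      have hz0 : ∫ ω, g ω * ind ω ∂μ = 0 := by
        rw [integral_congr_ae hz']; simp
      rw [hz0]; positivity
    · set t : ℝ := Real.sqrt I / Real.sqrt p with htdef
      have hsqI : (0:ℝ) < Real.sqrt I := Real.sqrt_pos.mpr hIpos
      have hsqp : (0:ℝ) < Real.sqrt p := Real.sqrt_pos.mpr hp
      have ht : 0 < t := div_pos hsqI hsqp
      have hptw : ∀ ω, g ω * ind ω ≤ (f' (S ω))^2 / (2 * t) + (t / 2) * ind ω := by
        intro ω
        rcases (by by_cases h : ω ∈ A <;> simp [hinddef, h] :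
            ind ω = 0 ∨ ind ω = 1) with h | h
        · rw [h, mul_zero, mul_zero, add_zero]; positivity
        · rw [h, mul_one, mul_one, ← hgsq ω]
          rw [div_add' _ _ _ (by positivity), le_div_iff₀ (by positivity)]
          nlinarith [sq_nonneg (g ω - t)]
      have hint_rhs : Integrable
          (fun ω => (f' (S ω))^2 / (2 * t) + (t / 2) * ind ω) μ :=
        (hf'int.div_const _).add (hindint.const_mul _)
      calc ∫ ω, g ω * ind ω ∂μ
          ≤ ∫ ω, ((f' (S ω))^2 / (2 * t) + (t / 2) * ind ω) ∂μ :=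
            integral_mono hgind_int hint_rhs hptw
        _ = I / (2 * t) + (t / 2) * p := by
            have e1 : ∫ ω, (f' (S ω))^2 / (2 * t) ∂μ = I / (2 * t) :=
              integral_div _ _
            have e2 : ∫ ω, (t / 2) * ind ω ∂μ = (t / 2) * p := by
              rw [integral_const_mul, hindeq]
            rw [integral_add (hf'int.div_const _) (hindint.const_mul _), e1, e2]
        _ = Real.sqrt I * Real.sqrt p := by
            have h1 : Real.sqrt I * Real.sqrt I = I := Real.mul_self_sqrt hI0
            have h2 : Real.sqrt p * Real.sqrt p = p := Real.mul_self_sqrt hp0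
            rw [htdef]
            field_simp
            nlinarith [h1, h2, hsqI, hsqp]
  -- Numerator bound: NΔ ≤ N0 + Δ * (√I √p)
  have hNum : NΔ ≤ N0 + Δ * (Real.sqrt I * Real.sqrt p) := by
    have h1 : NΔ - N0 = ∫ ω, (f (S ω + W ω) - f (S ω + W0 ω)) ∂μ :=
      (integral_sub hintfΔ hintf0).symm
    have h2 : ∫ ω, (f (S ω + W ω) - f (S ω + W0 ω)) ∂μ
        ≤ ∫ ω, Δ * (g ω * ind ω) ∂μ :=
      integral_mono (hintfΔ.sub hintf0) (hgind_int.const_mul _) hpt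
    have h3 : ∫ ω, Δ * (g ω * ind ω) ∂μ = Δ * ∫ ω, g ω * ind ω ∂μ :=
      integral_const_mul _ _
    have h4 : Δ * ∫ ω, g ω * ind ω ∂μ ≤ Δ * (Real.sqrt I * Real.sqrt p) :=
      mul_le_mul_of_nonneg_left hCS hΔ
    linarith [h1, h2, h3.le, h3.ge, h4]
  -- Denominator bound: w0 - wΔ ≤ Δ * p
  have hDen : w0 - wΔ ≤ Δ * p := by
    have hptw : ∀ ω, W0 ω - W ω ≤ Δ * ind ω := by
      intro ω
      by_cases h : ω ∈ A
      · have : ind ω = 1 := by simp [hinddef, h]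
        rw [this, mul_one]
        simp only [hWdef, hW0def]
        rcases le_or_gt (S₁ ω - Δ - D ω) 0 with hc | hc
        · rw [max_eq_right hc, sub_zero]
          exact max_le (by linarith) hΔ
        · rw [max_eq_left hc.le, max_eq_left (by linarith)]; linarith
      · have hi : ind ω = 0 := by simp [hinddef, h]
        have hx : S₁ ω - D ω ≤ 0 := by
          simp only [hAdef, mem_setOf_eq, not_lt] at h; exact h
        simp only [hWdef, hW0def]
        rw [hi, mul_zero, max_eq_right hx, max_eq_right (by linarith)]
        simp
    have h1 : w0 - wΔ = ∫ ω, (W0 ω - W ω) ∂μ := (integral_sub hW0int hWint).symm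
    have h2 : ∫ ω, (W0 ω - W ω) ∂μ ≤ ∫ ω, Δ * ind ω ∂μ :=
      integral_mono (hW0int.sub hWint) (hindint.const_mul _) hptw
    have h3 : ∫ ω, Δ * ind ω ∂μ = Δ * p := by
      rw [integral_const_mul, hindeq]
    linarith
  -- positivity of the base denominator
  have hw0pos : 0 < w0 := by
    rw [hw0def]
    rw [integral_pos_iff_support_of_nonneg hW0nn hW0int]
    have hsub : A ⊆ Function.support W0 := by
      intro ω hω
      simp only [hAdef, mem_setOf_eq] at hω
      simp only [Function.mem_support]
      have he : W0 ω = S₁ ω - D ω := max_eq_left hω.le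
      rw [he]; exact ne_of_gt hω
    have hAne : μ A ≠ 0 := by
      intro h
      rw [hpdef, h] at hp
      simp at hp
    calc (0:ENNReal) < μ A := by
          exact lt_of_le_of_ne zero_le (Ne.symm hAne)
      _ ≤ μ (Function.support W0) := measure_mono hsub
  have hA0pos : 0 < d + w0 := by linarith
  have hADpos : 0 < Δ + d + wΔ := by
    nlinarith [hDen, mul_nonneg hΔ (sub_nonneg.mpr hp1.le)]
  -- F ≤ N0
  have hFle : F ≤ N0 := by
    have hintF : Integrable (fun ω => f (S ω + S₁ ω)) μ := by
      refine hintf0.mono' ((hfcont.measurable.comp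
        (hSm.add hS1m)).aestronglyMeasurable) (ae_of_all _ fun ω => ?_)
      rw [Real.norm_eq_abs, abs_of_nonneg (hf0 _)]
      exact hfanti (by linarith [hW0leS1 ω])
    exact integral_mono hintF hintf0 fun ω => hfanti (by linarith [hW0leS1 ω])
  -- key inequality from the condition
  have hkey : Real.sqrt I * Real.sqrt p * (d + w0) ≤ N0 * (1 - p) := by
    have hE : ∫ ω, (D ω + S ω + 1) ∂μ = d + (∫ ω, S ω ∂μ) + 1 := by
      have hadd : Integrable (fun ω => D ω + S ω) μ := hDint.add hSint
      rw [integral_add hadd (integrable_const 1),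
        integral_add hDint hSint, integral_const]
      simp [hddef]
    have hw0le : w0 ≤ ∫ ω, S ω ∂μ := by
      rw [hES, hw0def]
      exact integral_mono hW0int hS1int hW0leS1
    have hsqp : (0:ℝ) < Real.sqrt p := Real.sqrt_pos.mpr hp
    have hcond' : (∫ ω, (D ω + S ω + 1) ∂μ) * Real.sqrt I
        ≤ F * (1 / Real.sqrt p - Real.sqrt p) := by
      calc (∫ ω, (D ω + S ω + 1) ∂μ) * Real.sqrt I
          = ((∫ ω, (D ω + S ω + 1) ∂μ) * Real.sqrt I / F) * F := by
            field_simp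
        _ ≤ (1 / Real.sqrt p - Real.sqrt p) * F :=
            mul_le_mul_of_nonneg_right hcond (le_of_lt hfpos)
        _ = F * (1 / Real.sqrt p - Real.sqrt p) := mul_comm _ _
    have hsqmul : Real.sqrt p * (1 / Real.sqrt p - Real.sqrt p) = 1 - p := by
      rw [mul_sub, mul_one_div, div_self (ne_of_gt hsqp), Real.mul_self_sqrt hp0]
    have hEge : d + w0 ≤ ∫ ω, (D ω + S ω + 1) ∂μ := by
      rw [hE]; linarith
    have hsqI0 : (0:ℝ) ≤ Real.sqrt I := Real.sqrt_nonneg _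
    calc Real.sqrt I * Real.sqrt p * (d + w0)
        = Real.sqrt p * ((d + w0) * Real.sqrt I) := by ring
      _ ≤ Real.sqrt p * ((∫ ω, (D ω + S ω + 1) ∂μ) * Real.sqrt I) := by
          apply mul_le_mul_of_nonneg_left _ hsqp.le
          exact mul_le_mul_of_nonneg_right hEge hsqI0
      _ ≤ Real.sqrt p * (F * (1 / Real.sqrt p - Real.sqrt p)) :=
          mul_le_mul_of_nonneg_left hcond' hsqp.le
      _ = F * (Real.sqrt p * (1 / Real.sqrt p - Real.sqrt p)) := by ring
      _ = F * (1 - p) := by rw [hsqmul]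
      _ ≤ N0 * (1 - p) := mul_le_mul_of_nonneg_right hFle (by linarith)
  -- finish
  have step1 : NΔ / (Δ + d + wΔ)
      ≤ (N0 + Δ * (Real.sqrt I * Real.sqrt p)) / (d + w0 + Δ * (1 - p)) := by
    apply div_le_div₀ (by positivity) hNum (by nlinarith) (by nlinarith [hDen])
  have step2 : (N0 + Δ * (Real.sqrt I * Real.sqrt p)) / (d + w0 + Δ * (1 - p))
      ≤ N0 / (d + w0) := by
    rw [div_le_div_iff₀ (by nlinarith) hA0pos]
    have h1 : Δ * (Real.sqrt I * Real.sqrt p * (d + w0)) ≤ Δ * (N0 * (1 - p)) :=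
      mul_le_mul_of_nonneg_left hkey hΔ
    nlinarith [h1]
  exact le_trans step1 step2
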